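/- Let d ≥ 1 be an integer, γ ∈ (1/2,(d+2)/4), and c₀ = (2π)^{−d/2}. Suppose ρ : (ℝ^d \ {0}) × [0,∞) → ℝ is bounded and measurable and satisfies, for all ξ ≠ 0 and t ≥ 0, ρ(ξ,t) = e^{−|ξ|^{2γ}t} + ∫_0^t |ξ|^{2γ} e^{−|ξ|^{2γ}s} ∫_{ℝ^d} ρ(η,t−s) ρ(ξ−η,t−s) H(η|ξ) dη ds. Then the function v(ξ,t) = c₀^{−1} h(ξ) ρ(ξ,t) satisfies, for all ξ ≠ 0 and t ≥ 0, v(ξ,t) = e^{−|ξ|^{2γ}t} c₀^{−1} h(ξ) + c₀ ∫_0^t |ξ| e^{−|ξ|^{2γ}s} ∫_{ℝ^d} v(η,t−s) v(ξ−η,t−s) dη ds. In particular (taking ρ ≡ 1), the time-independent function v₁(ξ,t) = c₀^{−1} h(ξ) satisfies this mild fractional Montgomery–Smith equation with initial data c₀^{−1} h. -/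

import Mathlib

open MeasureTheory Set Real

lemma gammaRep_integrable {u r : ℝ} (hu : 0 < u) (hr : 0 < r) :
    IntegrableOn (fun t : ℝ => t ^ (u - 1) * exp (-(r * t))) (Ioi 0) := by
  have := integrableOn_rpow_mul_exp_neg_mul_rpow (p := 1) (s := u - 1) (b := r)
    (by linarith) zero_lt_one hr
  simpa [Real.rpow_one, neg_mul] using this

lemma gammaRep_lint {u r : ℝ} (hu : 0 < u) (hr : 0 < r) :
    ∫⁻ t in Ioi (0:ℝ), ENNReal.ofReal (t ^ (u - 1) * exp (-(r * t)))
      = ENNReal.ofReal (r ^ (-u) * Gamma u) := by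
  rw [← ofReal_integral_eq_lintegral_ofReal (gammaRep_integrable hu hr)]
  · rw [integral_rpow_mul_exp_neg_mul_Ioi hu hr]
    congr 1
    rw [one_div, ← Real.rpow_neg_one, ← Real.rpow_mul hr.le]
    norm_num
  · filter_upwards [ae_restrict_mem measurableSet_Ioi] with t ht
    have : (0:ℝ) < t := ht
    positivity

lemma lint_scale {f : ℝ → ENNReal} (hf : Measurable f) {t : ℝ} (ht : 0 < t) :
    ∫⁻ s in Ioi (0:ℝ), f s = ENNReal.ofReal t * ∫⁻ z in Ioi (0:ℝ), f (t * z) := by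
  have hmap : Measure.map (fun x : ℝ => t * x) (volume.restrict (Ioi 0))
      = ENNReal.ofReal t⁻¹ • volume.restrict (Ioi 0) := by
    have hpre : (fun x : ℝ => t * x) ⁻¹' (Ioi 0) = Ioi 0 := by
      ext x
      simp only [mem_preimage, mem_Ioi]
      constructor
      · intro h; nlinarith
      · intro h; positivity
    have hm : Measurable (fun x : ℝ => t * x) := by fun_prop
    calc Measure.map (fun x : ℝ => t * x) (volume.restrict (Ioi 0))
        = Measure.map (fun x : ℝ => t * x) (volume.restrict ((fun x : ℝ => t * x) ⁻¹' (Ioi 0))) := by rw [hpre]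
      _ = (Measure.map (fun x : ℝ => t * x) volume).restrict (Ioi 0) := (Measure.restrict_map hm measurableSet_Ioi).symm
      _ = (ENNReal.ofReal |t⁻¹| • volume).restrict (Ioi 0) := by rw [Real.map_volume_mul_left (ne_of_gt ht)]
      _ = ENNReal.ofReal t⁻¹ • volume.restrict (Ioi 0) := by
            rw [Measure.restrict_smul, abs_of_pos (by positivity)]
  have h1 : ∫⁻ z in Ioi (0:ℝ), f (t * z)
      = ∫⁻ s, f s ∂(Measure.map (fun x : ℝ => t * x) (volume.restrict (Ioi 0))) := by
    rw [lintegral_map hf (by fun_prop)]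
  rw [h1, hmap]
  simp only [lintegral_smul_measure, smul_eq_mul]
  rw [← mul_assoc, ← ENNReal.ofReal_mul ht.le, mul_inv_cancel₀ (ne_of_gt ht),
    ENNReal.ofReal_one, one_mul]

lemma beta_lint {α β : ℝ} (hα : 0 < α) (hβ : 0 < β) :
    ∫⁻ z in Ioi (0:ℝ), ENNReal.ofReal (z ^ (α - 1) * (1 + z) ^ (-(α + β)))
      = ENNReal.ofReal (Gamma α * Gamma β / Gamma (α + β)) := by
  have hαβ : 0 < α + β := by linarith
  have hΓ : 0 < Gamma (α + β) := Gamma_pos_of_pos hαβ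
  set L := ∫⁻ z in Ioi (0:ℝ), ENNReal.ofReal (z ^ (α - 1) * (1 + z) ^ (-(α + β))) with hL
  have key : L * ENNReal.ofReal (Gamma (α + β)) = ENNReal.ofReal (Gamma α * Gamma β) := by
    have hmF : Measurable (Function.uncurry fun z w : ℝ =>
        ENNReal.ofReal (z ^ (α - 1) * (w ^ (α + β - 1) * exp (-((1 + z) * w))))) := by
      apply Measurable.ennreal_ofReal
      fun_prop
    calc L * ENNReal.ofReal (Gamma (α + β))
        = ∫⁻ z in Ioi (0:ℝ), ENNReal.ofReal (z ^ (α - 1) * (1 + z) ^ (-(α + β)))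
            * ENNReal.ofReal (Gamma (α + β)) := by
          rw [hL, lintegral_mul_const' _ _ ENNReal.ofReal_ne_top]
      _ = ∫⁻ z in Ioi (0:ℝ), ∫⁻ w in Ioi (0:ℝ),
            ENNReal.ofReal (z ^ (α - 1) * (w ^ (α + β - 1) * exp (-((1 + z) * w)))) := by
          apply lintegral_congr_ae
          filter_upwards [ae_restrict_mem measurableSet_Ioi] with z hz
          have hz' : (0:ℝ) < z := hz
          have h1z : (0:ℝ) < 1 + z := by linarith
          rw [ENNReal.ofReal_mul (by positivity), mul_assoc, ← ENNReal.ofReal_mul (by positivity),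
            ← gammaRep_lint hαβ h1z, ← lintegral_const_mul' _ _ ENNReal.ofReal_ne_top]
          apply lintegral_congr_ae
          filter_upwards [ae_restrict_mem measurableSet_Ioi] with w hw
          rw [← ENNReal.ofReal_mul (by positivity)]
      _ = ∫⁻ w in Ioi (0:ℝ), ∫⁻ z in Ioi (0:ℝ),
            ENNReal.ofReal (z ^ (α - 1) * (w ^ (α + β - 1) * exp (-((1 + z) * w)))) :=
          lintegral_lintegral_swap hmF.aemeasurable
      _ = ∫⁻ w in Ioi (0:ℝ), ENNReal.ofReal (Gamma α * (w ^ (β - 1) * exp (-w))) := by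
          apply lintegral_congr_ae
          filter_upwards [ae_restrict_mem measurableSet_Ioi] with w hw
          have hw' : (0:ℝ) < w := hw
          have hint : ∀ z : ℝ, z ^ (α - 1) * (w ^ (α + β - 1) * exp (-((1 + z) * w)))
              = w ^ (α + β - 1) * exp (-w) * (z ^ (α - 1) * exp (-(w * z))) := by
            intro z
            rw [show -((1 + z) * w) = -w + -(w * z) by ring, Real.exp_add]
            ring
          simp_rw [hint]
          calc ∫⁻ z in Ioi (0:ℝ), ENNReal.ofReal (w ^ (α + β - 1) * exp (-w)
                * (z ^ (α - 1) * exp (-(w * z))))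
              = ∫⁻ z in Ioi (0:ℝ), ENNReal.ofReal (w ^ (α + β - 1) * exp (-w))
                * ENNReal.ofReal (z ^ (α - 1) * exp (-(w * z))) := by
                apply lintegral_congr_ae
                filter_upwards [ae_restrict_mem measurableSet_Ioi] with z hz
                rw [← ENNReal.ofReal_mul (by positivity)]
            _ = ENNReal.ofReal (w ^ (α + β - 1) * exp (-w))
                * ENNReal.ofReal (w ^ (-α) * Gamma α) := by
                rw [lintegral_const_mul' _ _ ENNReal.ofReal_ne_top, gammaRep_lint hα hw']
            _ = ENNReal.ofReal (Gamma α * (w ^ (β - 1) * exp (-w))) := by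
                rw [← ENNReal.ofReal_mul (by positivity)]
                congr 1
                have hww : w ^ (α + β - 1) * w ^ (-α) = w ^ (β - 1) := by
                  rw [← Real.rpow_add hw']
                  congr 1
                  ring
                calc w ^ (α + β - 1) * exp (-w) * (w ^ (-α) * Gamma α)
                    = w ^ (α + β - 1) * w ^ (-α) * exp (-w) * Gamma α := by ring
                  _ = Gamma α * (w ^ (β - 1) * exp (-w)) := by rw [hww]; ring
      _ = ENNReal.ofReal (Gamma α) * ∫⁻ w in Ioi (0:ℝ),
            ENNReal.ofReal (w ^ (β - 1) * exp (-(1 * w))) := by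
          simp_rw [ENNReal.ofReal_mul (Gamma_nonneg_of_nonneg hα.le), one_mul]
          rw [lintegral_const_mul' _ _ ENNReal.ofReal_ne_top]
      _ = ENNReal.ofReal (Gamma α * Gamma β) := by
          rw [gammaRep_lint hβ one_pos, ← ENNReal.ofReal_mul (Gamma_nonneg_of_nonneg hα.le)]
          norm_num
  rw [ENNReal.ofReal_div_of_pos hΓ, ENNReal.eq_div_iff (ENNReal.ofReal_pos.mpr hΓ).ne'
    ENNReal.ofReal_ne_top, mul_comm]
  exact key

lemma sq_complete {d : ℕ} {t s : ℝ} (hts : 0 < t + s) (ξ η : EuclideanSpace ℝ (Fin d)) :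
    t * ‖η‖^2 + s * ‖ξ - η‖^2
      = (t + s) * ‖η - (s / (t + s)) • ξ‖^2 + t * s / (t + s) * ‖ξ‖^2 := by
  have h1 : ‖ξ - η‖^2 = ‖ξ‖^2 - 2 * inner ℝ ξ η + ‖η‖^2 := norm_sub_sq_real ξ η
  have h2 : ‖η - (s / (t + s)) • ξ‖^2
      = ‖η‖^2 - 2 * (s / (t + s) * inner ℝ ξ η) + (s / (t + s))^2 * ‖ξ‖^2 := by
    rw [norm_sub_sq_real, real_inner_smul_right, norm_smul]
    rw [real_inner_comm]
    rw [mul_pow, Real.norm_eq_abs, sq_abs]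
  rw [h1, h2]
  field_simp
  ring

lemma gauss_integrable_basic {d : ℕ} {b : ℝ} (hb : 0 < b) :
    Integrable (fun v : EuclideanSpace ℝ (Fin d) => exp (-b * ‖v‖^2)) := by
  have h := (GaussianFourier.integrable_cexp_neg_mul_sq_norm_add (b := (b:ℂ))
    (by simpa using hb) 0 (0 : EuclideanSpace ℝ (Fin d))).norm
  convert h using 2 with v
  simp [Complex.norm_exp, ← Complex.ofReal_pow]

lemma gauss_val {d : ℕ} {t s : ℝ} (ht : 0 < t) (hs : 0 < s) (ξ : EuclideanSpace ℝ (Fin d)) :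
    Integrable (fun η : EuclideanSpace ℝ (Fin d) => exp (-(t * ‖η‖^2 + s * ‖ξ - η‖^2))) ∧
    ∫ η : EuclideanSpace ℝ (Fin d), exp (-(t * ‖η‖^2 + s * ‖ξ - η‖^2))
      = (π / (t + s)) ^ ((d:ℝ)/2) * exp (-(t * s / (t + s) * ‖ξ‖^2)) := by
  have hts : 0 < t + s := by linarith
  have hrw : (fun η : EuclideanSpace ℝ (Fin d) => exp (-(t * ‖η‖^2 + s * ‖ξ - η‖^2)))
      = fun η => exp (-(t + s) * ‖η - (s / (t + s)) • ξ‖^2)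
          * exp (-(t * s / (t + s) * ‖ξ‖^2)) := by
    funext η
    rw [sq_complete hts ξ η, neg_add, Real.exp_add, neg_mul]
  constructor
  · rw [hrw]
    exact ((gauss_integrable_basic hts).comp_sub_right _).mul_const _
  · rw [hrw, integral_mul_const]
    have h2 : ∫ η : EuclideanSpace ℝ (Fin d), exp (-(t + s) * ‖η - (s / (t + s)) • ξ‖^2)
        = ∫ η : EuclideanSpace ℝ (Fin d), exp (-(t + s) * ‖η‖^2) :=
      integral_sub_right_eq_self
        (fun η : EuclideanSpace ℝ (Fin d) => exp (-(t + s) * ‖η‖^2)) ((s / (t + s)) • ξ)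
    rw [h2, GaussianFourier.integral_rexp_neg_mul_sq_norm hts, finrank_euclideanSpace_fin]

lemma key_lint_gen {d : ℕ} (hd : 1 ≤ d) {a : ℝ} (ha : 0 < a) (had : 2 * a < d)
    {ξ : EuclideanSpace ℝ (Fin d)} (hξ : ξ ≠ 0) :
    ∫⁻ η : EuclideanSpace ℝ (Fin d),
        ENNReal.ofReal (‖η‖ ^ (a - (d:ℝ)) * ‖ξ - η‖ ^ (a - (d:ℝ)))
      = ENNReal.ofReal (π ^ ((d:ℝ)/2) * Gamma ((d:ℝ)/2 - a) * Gamma (a/2)^2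
          / (Gamma a * Gamma (((d:ℝ) - a)/2)^2) * ‖ξ‖ ^ (2 * a - (d:ℝ))) := by
  have hd' : (1:ℝ) ≤ d := by exact_mod_cast hd
  set u : ℝ := ((d:ℝ) - a)/2 with hu_def
  set b : ℝ := (d:ℝ)/2 - a with hb_def
  have hu : 0 < u := by rw [hu_def]; nlinarith
  have hb : 0 < b := by rw [hb_def]; nlinarith
  have hR : (0:ℝ) < ‖ξ‖ := norm_pos_iff.mpr hξ
  set R : ℝ := ‖ξ‖ with hR_def
  have hΓu : 0 < Gamma u := Gamma_pos_of_pos hu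
  have hΓb : 0 < Gamma b := Gamma_pos_of_pos hb
  have hΓa : 0 < Gamma a := Gamma_pos_of_pos ha
  have hΓa2 : 0 < Gamma (a/2) := Gamma_pos_of_pos (by positivity)
  haveI : Nontrivial (EuclideanSpace ℝ (Fin d)) := by
    apply Module.nontrivial_of_finrank_pos (R := ℝ)
    rw [finrank_euclideanSpace_fin]
    omega
  -- the rpow identity for norms
  have hnorm_rpow : ∀ x : ℝ, 0 < x → (x^2 : ℝ) ^ (-u) = x ^ (a - (d:ℝ)) := by
    intro x hx
    rw [← Real.rpow_natCast x 2, ← Real.rpow_mul hx.le]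
    congr 1
    rw [hu_def]; push_cast; ring
  -- Step 1+2: rewrite the lintegral with Gamma factors
  set Q : Measure (ℝ × ℝ) := (volume.restrict (Ioi 0)).prod (volume.restrict (Ioi 0)) with hQ_def
  set Φ : EuclideanSpace ℝ (Fin d) → ℝ × ℝ → ENNReal := fun η q =>
    ENNReal.ofReal (q.1 ^ (u-1) * exp (-(‖η‖^2 * q.1)))
      * ENNReal.ofReal (q.2 ^ (u-1) * exp (-(‖ξ - η‖^2 * q.2))) with hΦ_def
  have step1 : ∀ᵐ η : EuclideanSpace ℝ (Fin d),
      ENNReal.ofReal (Gamma u * ‖η‖ ^ (a - (d:ℝ))) * ENNReal.ofReal (Gamma u * ‖ξ - η‖ ^ (a - (d:ℝ)))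
        = ∫⁻ q, Φ η q ∂Q := by
    have h0 : ∀ᵐ η : EuclideanSpace ℝ (Fin d), η ≠ (0 : EuclideanSpace ℝ (Fin d)) := by
      rw [ae_iff]; simpa using measure_singleton (0 : EuclideanSpace ℝ (Fin d))
    have hxi : ∀ᵐ η : EuclideanSpace ℝ (Fin d), η ≠ ξ := by
      rw [ae_iff]; simpa using measure_singleton ξ
    filter_upwards [h0, hxi] with η hη0 hηξ
    have hn1 : (0:ℝ) < ‖η‖ := norm_pos_iff.mpr hη0
    have hn2 : (0:ℝ) < ‖ξ - η‖ := by
      rw [norm_pos_iff, sub_ne_zero]; exact fun h => hηξ h.symm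
    have e1 : ENNReal.ofReal (Gamma u * ‖η‖ ^ (a - (d:ℝ)))
        = ∫⁻ t in Ioi (0:ℝ), ENNReal.ofReal (t ^ (u-1) * exp (-(‖η‖^2 * t))) := by
      rw [gammaRep_lint hu (by positivity), hnorm_rpow _ hn1, mul_comm]
    have e2 : ENNReal.ofReal (Gamma u * ‖ξ - η‖ ^ (a - (d:ℝ)))
        = ∫⁻ t in Ioi (0:ℝ), ENNReal.ofReal (t ^ (u-1) * exp (-(‖ξ - η‖^2 * t))) := by
      rw [gammaRep_lint hu (by positivity), hnorm_rpow _ hn2, mul_comm]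
    rw [e1, e2, hQ_def, ← lintegral_prod_mul (by fun_prop) (by fun_prop)]
  have swap1 : ∫⁻ η : EuclideanSpace ℝ (Fin d), ∫⁻ q, Φ η q ∂Q
      = ∫⁻ q, (∫⁻ η : EuclideanSpace ℝ (Fin d), Φ η q) ∂Q := by
    apply lintegral_lintegral_swap
    apply Measurable.aemeasurable
    simp only [hΦ_def, Function.uncurry_def]
    exact (Measurable.ennreal_ofReal (by fun_prop)).mul (Measurable.ennreal_ofReal (by fun_prop))
  set ψ : ℝ → ℝ → ENNReal := fun t s =>
    ENNReal.ofReal (t ^ (u-1) * s ^ (u-1) * ((π/(t+s)) ^ ((d:ℝ)/2)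
      * exp (-(t*s/(t+s) * R^2)))) with hψ_def
  have step3 : ∀ᵐ q ∂Q, (∫⁻ η : EuclideanSpace ℝ (Fin d), Φ η q) = ψ q.1 q.2 := by
    have hQae : ∀ᵐ q : ℝ × ℝ ∂Q, q ∈ Ioi (0:ℝ) ×ˢ Ioi (0:ℝ) := by
      rw [hQ_def, Measure.prod_restrict]
      exact ae_restrict_mem (measurableSet_Ioi.prod measurableSet_Ioi)
    filter_upwards [hQae] with q hq
    obtain ⟨hq1, hq2⟩ := hq
    have hq1' : (0:ℝ) < q.1 := hq1
    have hq2' : (0:ℝ) < q.2 := hq2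
    have hpt : ∀ η : EuclideanSpace ℝ (Fin d), Φ η q
        = ENNReal.ofReal (q.1 ^ (u-1) * q.2 ^ (u-1))
          * ENNReal.ofReal (exp (-(q.1 * ‖η‖^2 + q.2 * ‖ξ - η‖^2))) := by
      intro η
      have hre : (q.1 ^ (u-1) * exp (-(‖η‖^2 * q.1))) * (q.2 ^ (u-1) * exp (-(‖ξ - η‖^2 * q.2)))
          = (q.1 ^ (u-1) * q.2 ^ (u-1)) * exp (-(q.1 * ‖η‖^2 + q.2 * ‖ξ - η‖^2)) := by
        rw [mul_mul_mul_comm, ← Real.exp_add,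
          show -(‖η‖^2 * q.1) + -(‖ξ - η‖^2 * q.2) = -(q.1 * ‖η‖^2 + q.2 * ‖ξ - η‖^2) from by ring]
      simp only [hΦ_def]
      rw [← ENNReal.ofReal_mul (by positivity), hre, ENNReal.ofReal_mul (by positivity)]
    simp_rw [hpt]
    rw [lintegral_const_mul' _ _ ENNReal.ofReal_ne_top,
      ← ofReal_integral_eq_lintegral_ofReal (gauss_val hq1' hq2' ξ).1
        (Filter.Eventually.of_forall fun η => (exp_pos _).le),
      (gauss_val hq1' hq2' ξ).2]
    simp only [hψ_def]
    rw [← ENNReal.ofReal_mul (by positivity), ← hR_def]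
  set g : ℝ → ℝ → ENNReal := fun t z =>
    ENNReal.ofReal (π ^ ((d:ℝ)/2) * (z ^ (u-1) * (1+z) ^ (-((d:ℝ)/2)))
      * (t ^ (b-1) * exp (-((z/(1+z) * R^2) * t)))) with hg_def
  have step5 : ∀ᵐ t ∂(volume.restrict (Ioi (0:ℝ))),
      (∫⁻ s in Ioi (0:ℝ), ψ t s) = ∫⁻ z in Ioi (0:ℝ), g t z := by
    filter_upwards [ae_restrict_mem measurableSet_Ioi] with t ht
    have ht' : (0:ℝ) < t := ht
    rw [lint_scale (f := fun s => ψ t s) (by apply Measurable.ennreal_ofReal; fun_prop) ht',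
      ← lintegral_const_mul' _ _ ENNReal.ofReal_ne_top]
    apply lintegral_congr_ae
    filter_upwards [ae_restrict_mem measurableSet_Ioi] with z hz
    have hz' : (0:ℝ) < z := hz
    have h1z : (0:ℝ) < 1 + z := by linarith
    simp only [hψ_def, hg_def]
    rw [← ENNReal.ofReal_mul ht'.le]
    congr 1
    have e1 : t + t*z = t*(1+z) := by ring
    have h2 : (1+z : ℝ) ≠ 0 := by positivity
    have e2' : t*(t*z)/(t+t*z) = z/(1+z)*t := by
      rw [e1]
      field_simp
    have e2 : -(t*(t*z)/(t+t*z) * R^2) = -((z/(1+z) * R^2) * t) := by rw [e2']; ring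
    have e3 : (t*z)^(u-1) = t^(u-1) * z^(u-1) := Real.mul_rpow ht'.le hz'.le
    have e4 : (π/(t+t*z))^((d:ℝ)/2) = π^((d:ℝ)/2) * (1+z)^(-((d:ℝ)/2)) * t^(-((d:ℝ)/2)) := by
      rw [e1, Real.div_rpow pi_pos.le (by positivity), Real.mul_rpow ht'.le h1z.le,
        Real.rpow_neg h1z.le, Real.rpow_neg ht'.le]
      rw [div_eq_mul_inv, mul_inv]
      ring
    have e5 : t^(b-1) = t * t^(u-1) * t^(u-1) * t^(-((d:ℝ)/2)) := by
      rw [show t * t^(u-1) * t^(u-1) * t^(-((d:ℝ)/2))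
          = t^(1:ℝ) * t^(u-1) * t^(u-1) * t^(-((d:ℝ)/2)) by rw [Real.rpow_one],
        ← Real.rpow_add ht', ← Real.rpow_add ht', ← Real.rpow_add ht']
      congr 1
      rw [hu_def, hb_def]; ring
    rw [e2, e3, e4, e5]
    ring
  have step7 : ∀ᵐ z ∂(volume.restrict (Ioi (0:ℝ))),
      (∫⁻ t in Ioi (0:ℝ), g t z)
        = ENNReal.ofReal (π ^ ((d:ℝ)/2) * Gamma b * R ^ (2*a - (d:ℝ)))
          * ENNReal.ofReal (z ^ (a/2 - 1) * (1+z) ^ (-(a/2 + a/2))) := by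
    filter_upwards [ae_restrict_mem measurableSet_Ioi] with z hz
    have hz' : (0:ℝ) < z := hz
    have h1z : (0:ℝ) < 1 + z := by linarith
    have hc : (0:ℝ) < z/(1+z) * R^2 := by positivity
    have hA : (0:ℝ) ≤ π ^ ((d:ℝ)/2) * (z ^ (u-1) * (1+z) ^ (-((d:ℝ)/2))) := by positivity
    simp only [hg_def]
    simp_rw [ENNReal.ofReal_mul hA]
    rw [lintegral_const_mul' _ _ ENNReal.ofReal_ne_top, gammaRep_lint hb hc,
      ← ENNReal.ofReal_mul hA, ← ENNReal.ofReal_mul (by positivity)]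
    congr 1
    have h1 : (z/(1+z) * R^2)^(-b) = z^(-b) * (1+z)^b * R^(2*a - (d:ℝ)) := by
      rw [Real.mul_rpow (by positivity) (by positivity),
        Real.div_rpow hz'.le h1z.le, div_eq_mul_inv, Real.rpow_neg h1z.le, inv_inv]
      congr 1
      rw [← Real.rpow_natCast R 2, ← Real.rpow_mul hR.le]
      congr 1
      rw [hb_def]; push_cast; ring
    have h2 : z^(u-1) * z^(-b) = z^(a/2-1) := by
      rw [← Real.rpow_add hz']
      congr 1
      rw [hu_def, hb_def]; ring
    have h3 : (1+z)^(-((d:ℝ)/2)) * (1+z)^b = (1+z)^(-(a/2 + a/2)) := by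
      rw [← Real.rpow_add h1z]
      congr 1
      rw [hb_def]; ring
    calc π ^ ((d:ℝ)/2) * (z ^ (u-1) * (1+z) ^ (-((d:ℝ)/2))) * ((z/(1+z) * R^2)^(-b) * Gamma b)
        = π ^ ((d:ℝ)/2) * (z ^ (u-1) * (1+z) ^ (-((d:ℝ)/2))) * (z^(-b) * (1+z)^b
            * R^(2*a - (d:ℝ)) * Gamma b) := by rw [h1]
      _ = π ^ ((d:ℝ)/2) * Gamma b * R^(2*a - (d:ℝ))
            * ((z^(u-1) * z^(-b)) * ((1+z)^(-((d:ℝ)/2)) * (1+z)^b)) := by ring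
      _ = π ^ ((d:ℝ)/2) * Gamma b * R^(2*a - (d:ℝ))
            * (z^(a/2-1) * (1+z)^(-(a/2 + a/2))) := by rw [h2, h3]
  -- assemble
  have hgmeas : Measurable (Function.uncurry g) := by
    apply Measurable.ennreal_ofReal; fun_prop
  have main : ∫⁻ η : EuclideanSpace ℝ (Fin d),
      ENNReal.ofReal (Gamma u * ‖η‖ ^ (a - (d:ℝ)))
        * ENNReal.ofReal (Gamma u * ‖ξ - η‖ ^ (a - (d:ℝ)))
      = ENNReal.ofReal (π ^ ((d:ℝ)/2) * Gamma b * R ^ (2*a - (d:ℝ))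
          * (Gamma (a/2) * Gamma (a/2) / Gamma a)) := by
    have hψm : Measurable (fun q : ℝ × ℝ => ψ q.1 q.2) := by
      apply Measurable.ennreal_ofReal; fun_prop
    rw [lintegral_congr_ae step1, swap1, lintegral_congr_ae step3]
    rw [hQ_def, lintegral_prod _ hψm.aemeasurable]
    rw [lintegral_congr_ae step5]
    rw [lintegral_lintegral_swap hgmeas.aemeasurable]
    rw [lintegral_congr_ae step7]
    rw [lintegral_const_mul' _ _ ENNReal.ofReal_ne_top, beta_lint (by positivity) (by positivity),
      ← ENNReal.ofReal_mul (by positivity), add_halves]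
  -- extract the target
  have expand : ∀ η : EuclideanSpace ℝ (Fin d),
      ENNReal.ofReal (Gamma u * ‖η‖ ^ (a - (d:ℝ)))
        * ENNReal.ofReal (Gamma u * ‖ξ - η‖ ^ (a - (d:ℝ)))
      = ENNReal.ofReal (Gamma u * Gamma u)
        * ENNReal.ofReal (‖η‖ ^ (a - (d:ℝ)) * ‖ξ - η‖ ^ (a - (d:ℝ))) := by
    intro η
    rw [ENNReal.ofReal_mul hΓu.le, ENNReal.ofReal_mul hΓu.le,
      ENNReal.ofReal_mul hΓu.le, ENNReal.ofReal_mul (Real.rpow_nonneg (norm_nonneg _) _)]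
    ring
  have main2 : ENNReal.ofReal (Gamma u * Gamma u)
      * ∫⁻ η : EuclideanSpace ℝ (Fin d),
        ENNReal.ofReal (‖η‖ ^ (a - (d:ℝ)) * ‖ξ - η‖ ^ (a - (d:ℝ)))
      = ENNReal.ofReal (π ^ ((d:ℝ)/2) * Gamma b * R ^ (2*a - (d:ℝ))
          * (Gamma (a/2) * Gamma (a/2) / Gamma a)) := by
    rw [← lintegral_const_mul' _ _ ENNReal.ofReal_ne_top, ← lintegral_congr expand]
    exact main
  have hne0 : ENNReal.ofReal (Gamma u * Gamma u) ≠ 0 :=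
    (ENNReal.ofReal_pos.mpr (by positivity)).ne'
  rw [(ENNReal.eq_div_iff hne0 ENNReal.ofReal_ne_top).mpr main2,
    ← ENNReal.ofReal_div_of_pos (by positivity)]
  congr 1
  have hΓune : Gamma u ≠ 0 := hΓu.ne'
  have hΓane : Gamma a ≠ 0 := hΓa.ne'
  field_simp


lemma key_integral {d : ℕ} (hd : 1 ≤ d) {a : ℝ} (ha : 0 < a) (had : 2 * a < d)
    {ξ : EuclideanSpace ℝ (Fin d)} (hξ : ξ ≠ 0) :
    Integrable (fun η : EuclideanSpace ℝ (Fin d) =>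
        ‖η‖ ^ (a - (d:ℝ)) * ‖ξ - η‖ ^ (a - (d:ℝ))) ∧
    ∫ η : EuclideanSpace ℝ (Fin d), ‖η‖ ^ (a - (d:ℝ)) * ‖ξ - η‖ ^ (a - (d:ℝ))
      = π ^ ((d:ℝ)/2) * Gamma ((d:ℝ)/2 - a) * Gamma (a/2)^2
          / (Gamma a * Gamma (((d:ℝ) - a)/2)^2) * ‖ξ‖ ^ (2 * a - (d:ℝ)) := by
  have hnn : ∀ η : EuclideanSpace ℝ (Fin d),
      0 ≤ ‖η‖ ^ (a - (d:ℝ)) * ‖ξ - η‖ ^ (a - (d:ℝ)) := fun η =>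
    mul_nonneg (Real.rpow_nonneg (norm_nonneg _) _) (Real.rpow_nonneg (norm_nonneg _) _)
  have hmeas : Measurable (fun η : EuclideanSpace ℝ (Fin d) =>
      ‖η‖ ^ (a - (d:ℝ)) * ‖ξ - η‖ ^ (a - (d:ℝ))) := by fun_prop
  have hCpos : (0:ℝ) < π ^ ((d:ℝ)/2) * Gamma ((d:ℝ)/2 - a) * Gamma (a/2)^2
      / (Gamma a * Gamma (((d:ℝ) - a)/2)^2) * ‖ξ‖ ^ (2 * a - (d:ℝ)) := by
    have h1 : 0 < Gamma ((d:ℝ)/2 - a) := Gamma_pos_of_pos (by nlinarith)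
    have h2 : 0 < Gamma (a/2) := Gamma_pos_of_pos (by positivity)
    have h3 : 0 < Gamma a := Gamma_pos_of_pos ha
    have h4 : 0 < Gamma (((d:ℝ) - a)/2) := Gamma_pos_of_pos (by nlinarith)
    have h5 : (0:ℝ) < ‖ξ‖ := norm_pos_iff.mpr hξ
    have h6 : (0:ℝ) < π ^ ((d:ℝ)/2) := Real.rpow_pos_of_pos pi_pos _
    have h7 : (0:ℝ) < ‖ξ‖ ^ (2 * a - (d:ℝ)) := Real.rpow_pos_of_pos h5 _
    positivity
  have hint : Integrable (fun η : EuclideanSpace ℝ (Fin d) =>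
      ‖η‖ ^ (a - (d:ℝ)) * ‖ξ - η‖ ^ (a - (d:ℝ))) := by
    refine ⟨hmeas.aestronglyMeasurable, ?_⟩
    rw [hasFiniteIntegral_iff_ofReal (Filter.Eventually.of_forall hnn)]
    rw [key_lint_gen hd ha had hξ]
    exact ENNReal.ofReal_lt_top
  refine ⟨hint, ?_⟩
  rw [integral_eq_lintegral_of_nonneg_ae (Filter.Eventually.of_forall hnn)
    hmeas.aestronglyMeasurable, key_lint_gen hd ha had hξ,
    ENNReal.toReal_ofReal hCpos.le]

lemma exp_interval_int {lam : ℝ} (hlam : lam ≠ 0) (t : ℝ) :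
    ∫ s in (0:ℝ)..t, exp (-lam * s) = (1 - exp (-lam * t)) / lam := by
  have h := intervalIntegral.integral_comp_mul_left (a := 0) (b := t)
    (fun x : ℝ => exp x) (neg_ne_zero.mpr hlam)
  simp only [mul_zero] at h
  rw [h, integral_exp]
  simp only [smul_eq_mul, Real.exp_zero]
  rw [div_eq_mul_inv, inv_neg]
  ring

/-- The constant `c_{d,γ}` of the standard majorizing kernel. -/
noncomputable def cdg (d : ℕ) (γ : ℝ) : ℝ :=
  Real.pi ^ (-(d : ℝ)/2) * Real.Gamma (2*γ - 1) * (Real.Gamma (((d : ℝ) + 1 - 2*γ)/2))^2 /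
    (Real.Gamma (((d : ℝ) + 2 - 4*γ)/2) * (Real.Gamma ((2*γ - 1)/2))^2)

/-- The standard majorizing kernel `h(ξ) = c_{d,γ} |ξ|^{2γ-d-1}`. -/
noncomputable def hker (d : ℕ) (γ : ℝ) (ξ : EuclideanSpace ℝ (Fin d)) : ℝ :=
  cdg d γ * ‖ξ‖ ^ (2*γ - (d : ℝ) - 1)

/-- `H(η|ξ) = c_{d,γ} |η|^{2γ−d−1} |ξ−η|^{2γ−d−1} |ξ|^{d+2−4γ}`. -/
noncomputable def Hker (d : ℕ) (γ : ℝ) (η ξ : EuclideanSpace ℝ (Fin d)) : ℝ :=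
  cdg d γ * ‖η‖ ^ (2*γ - (d : ℝ) - 1) * ‖ξ - η‖ ^ (2*γ - (d : ℝ) - 1)
    * ‖ξ‖ ^ ((d : ℝ) + 2 - 4*γ)

/-- The Fourier normalization constant `c₀ = (2π)^{−d/2}`. -/
noncomputable def c0 (d : ℕ) : ℝ := (2 * Real.pi) ^ (-(d : ℝ)/2)

lemma gamma_pos_all {d : ℕ} (hd : 1 ≤ d) {γ : ℝ} (h1 : 1/2 < γ) (h2 : γ < ((d:ℝ)+2)/4) :
    0 < Gamma (2*γ-1) ∧ 0 < Gamma (((d:ℝ)+1-2*γ)/2) ∧ 0 < Gamma (((d:ℝ)+2-4*γ)/2)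
      ∧ 0 < Gamma ((2*γ-1)/2) := by
  have hd' : (1:ℝ) ≤ d := by exact_mod_cast hd
  refine ⟨Gamma_pos_of_pos (by linarith), Gamma_pos_of_pos (by nlinarith),
    Gamma_pos_of_pos (by nlinarith), Gamma_pos_of_pos (by nlinarith)⟩

lemma cdg_pos {d : ℕ} (hd : 1 ≤ d) {γ : ℝ} (h1 : 1/2 < γ) (h2 : γ < ((d:ℝ)+2)/4) :
    0 < cdg d γ := by
  obtain ⟨g1, g2, g3, g4⟩ := gamma_pos_all hd h1 h2
  have hπ : (0:ℝ) < π ^ (-(d:ℝ)/2) := Real.rpow_pos_of_pos pi_pos _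
  unfold cdg
  exact div_pos (mul_pos (mul_pos hπ g1) (pow_pos g2 2)) (mul_pos g3 (pow_pos g4 2))

lemma cdg_inv_id {d : ℕ} (hd : 1 ≤ d) {γ : ℝ} (h1 : 1/2 < γ) (h2 : γ < ((d:ℝ)+2)/4) :
    π ^ ((d:ℝ)/2) * Gamma ((d:ℝ)/2 - (2*γ-1)) * Gamma ((2*γ-1)/2)^2
      / (Gamma (2*γ-1) * Gamma (((d:ℝ) - (2*γ-1))/2)^2) = (cdg d γ)⁻¹ := by
  obtain ⟨g1, g2, g3, g4⟩ := gamma_pos_all hd h1 h2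
  unfold cdg
  rw [show (d:ℝ)/2 - (2*γ-1) = ((d:ℝ)+2-4*γ)/2 from by ring,
    show ((d:ℝ) - (2*γ-1))/2 = ((d:ℝ)+1-2*γ)/2 from by ring,
    show (-(d:ℝ)/2) = -((d:ℝ)/2) from by ring, Real.rpow_neg pi_pos.le]
  have hπ : π ^ ((d:ℝ)/2) ≠ 0 := (Real.rpow_pos_of_pos pi_pos _).ne'
  field_simp

lemma key_spec {d : ℕ} (hd : 1 ≤ d) {γ : ℝ} (h1 : 1/2 < γ) (h2 : γ < ((d:ℝ)+2)/4)
    {ξ : EuclideanSpace ℝ (Fin d)} (hξ : ξ ≠ 0) :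
    Integrable (fun η : EuclideanSpace ℝ (Fin d) =>
        ‖η‖ ^ (2*γ-(d:ℝ)-1) * ‖ξ-η‖ ^ (2*γ-(d:ℝ)-1)) ∧
    ∫ η : EuclideanSpace ℝ (Fin d), ‖η‖ ^ (2*γ-(d:ℝ)-1) * ‖ξ-η‖ ^ (2*γ-(d:ℝ)-1)
      = (cdg d γ)⁻¹ * ‖ξ‖ ^ (4*γ-(d:ℝ)-2) := by
  have hd' : (1:ℝ) ≤ d := by exact_mod_cast hd
  have ha : 0 < 2*γ-1 := by linarith
  have had : 2*(2*γ-1) < (d:ℝ) := by nlinarith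
  have h := key_integral hd ha had hξ
  rw [show (2*γ-1) - (d:ℝ) = 2*γ-(d:ℝ)-1 from by ring,
    show 2*(2*γ-1) - (d:ℝ) = 4*γ-(d:ℝ)-2 from by ring,
    cdg_inv_id hd h1 h2] at h
  exact h

theorem stmt9 (d : ℕ) (hd : 1 ≤ d) (γ : ℝ)
    (hγ : γ ∈ Set.Ioo (1/2 : ℝ) (((d : ℝ) + 2)/4))
    (ρ : EuclideanSpace ℝ (Fin d) → ℝ → ℝ)
    (hmeas : Measurable (Function.uncurry ρ))
    (hbdd : ∃ C : ℝ, ∀ ξ t, |ρ ξ t| ≤ C)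
    (heq : ∀ ξ : EuclideanSpace ℝ (Fin d), ξ ≠ 0 → ∀ t : ℝ, 0 ≤ t →
      ρ ξ t = Real.exp (-(‖ξ‖ ^ (2*γ)) * t) +
        ∫ s in (0:ℝ)..t, ‖ξ‖ ^ (2*γ) * Real.exp (-(‖ξ‖ ^ (2*γ)) * s) *
          ∫ η, ρ η (t - s) * ρ (ξ - η) (t - s) * Hker d γ η ξ) :
    (∀ ξ : EuclideanSpace ℝ (Fin d), ξ ≠ 0 → ∀ t : ℝ, 0 ≤ t →
      (c0 d)⁻¹ * hker d γ ξ * ρ ξ t =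
        Real.exp (-(‖ξ‖ ^ (2*γ)) * t) * ((c0 d)⁻¹ * hker d γ ξ) +
          c0 d * ∫ s in (0:ℝ)..t, ‖ξ‖ * Real.exp (-(‖ξ‖ ^ (2*γ)) * s) *
            ∫ η, ((c0 d)⁻¹ * hker d γ η * ρ η (t - s)) *
              ((c0 d)⁻¹ * hker d γ (ξ - η) * ρ (ξ - η) (t - s))) ∧
    (∀ ξ : EuclideanSpace ℝ (Fin d), ξ ≠ 0 → ∀ t : ℝ, 0 ≤ t →
      (c0 d)⁻¹ * hker d γ ξ =
        Real.exp (-(‖ξ‖ ^ (2*γ)) * t) * ((c0 d)⁻¹ * hker d γ ξ) +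
          c0 d * ∫ s in (0:ℝ)..t, ‖ξ‖ * Real.exp (-(‖ξ‖ ^ (2*γ)) * s) *
            ∫ η, ((c0 d)⁻¹ * hker d γ η) * ((c0 d)⁻¹ * hker d γ (ξ - η))) := by
  obtain ⟨hγ1, hγ2⟩ := hγ
  have hc0 : (0:ℝ) < c0 d := by
    have : c0 d = (2 * π) ^ (-(d : ℝ)/2) := rfl
    rw [this]
    exact Real.rpow_pos_of_pos (by positivity) _
  constructor
  · -- first conjunct
    intro ξ hξ t ht
    have hR : (0:ℝ) < ‖ξ‖ := norm_pos_iff.mpr hξ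
    set W : ℝ → ℝ := fun s => ∫ η : EuclideanSpace ℝ (Fin d),
      ρ η (t - s) * ρ (ξ - η) (t - s)
        * (‖η‖ ^ (2*γ-(d:ℝ)-1) * ‖ξ-η‖ ^ (2*γ-(d:ℝ)-1)) with hW_def
    have hH : ∀ s : ℝ, (∫ η, ρ η (t - s) * ρ (ξ - η) (t - s) * Hker d γ η ξ)
        = (cdg d γ * ‖ξ‖ ^ ((d:ℝ)+2-4*γ)) * W s := by
      intro s
      rw [hW_def, ← integral_const_mul]
      congr 1
      funext η
      simp only [Hker]
      ring
    have hG : ∀ s : ℝ, (∫ η, ((c0 d)⁻¹ * hker d γ η * ρ η (t - s)) *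
          ((c0 d)⁻¹ * hker d γ (ξ - η) * ρ (ξ - η) (t - s)))
        = ((c0 d)⁻¹ * (c0 d)⁻¹ * cdg d γ * cdg d γ) * W s := by
      intro s
      rw [hW_def, ← integral_const_mul]
      congr 1
      funext η
      simp only [hker]
      ring
    rw [heq ξ hξ t ht, mul_add]
    congr 1
    · ring
    simp_rw [hH, hG]
    rw [← intervalIntegral.integral_const_mul, ← intervalIntegral.integral_const_mul]
    apply intervalIntegral.integral_congr
    intro s _
    simp only [hker]
    have hRid : ‖ξ‖ ^ (2*γ-(d:ℝ)-1) * (‖ξ‖ ^ (2*γ) * ‖ξ‖ ^ ((d:ℝ)+2-4*γ)) = ‖ξ‖ := by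
      rw [← Real.rpow_add hR, ← Real.rpow_add hR,
        show 2*γ-(d:ℝ)-1 + (2*γ + ((d:ℝ)+2-4*γ)) = (1:ℝ) from by ring, Real.rpow_one]
    have hc0ne : c0 d ≠ 0 := hc0.ne'
    trans ((cdg d γ * cdg d γ) * (c0 d)⁻¹ * Real.exp (-(‖ξ‖ ^ (2*γ)) * s) * W s * ‖ξ‖)
    · calc _ = (cdg d γ * cdg d γ) * (c0 d)⁻¹ * Real.exp (-(‖ξ‖ ^ (2*γ)) * s) * W s
            * (‖ξ‖ ^ (2*γ-(d:ℝ)-1) * (‖ξ‖ ^ (2*γ) * ‖ξ‖ ^ ((d:ℝ)+2-4*γ))) := by ring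
        _ = _ := by rw [hRid]
    · calc (cdg d γ * cdg d γ) * (c0 d)⁻¹ * Real.exp (-(‖ξ‖ ^ (2*γ)) * s) * W s * ‖ξ‖
          = (c0 d * (c0 d)⁻¹) * ((cdg d γ * cdg d γ) * (c0 d)⁻¹
              * Real.exp (-(‖ξ‖ ^ (2*γ)) * s) * W s * ‖ξ‖) := by
            rw [mul_inv_cancel₀ hc0ne, one_mul]
        _ = _ := by ring
  · -- second conjunct
    intro ξ hξ t ht
    have hR : (0:ℝ) < ‖ξ‖ := norm_pos_iff.mpr hξ
    have hL : (0:ℝ) < ‖ξ‖ ^ (2*γ) := Real.rpow_pos_of_pos hR _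
    have hcdg : 0 < cdg d γ := cdg_pos hd hγ1 hγ2
    have hspec := key_spec hd hγ1 hγ2 hξ
    have hK : (∫ η, ((c0 d)⁻¹ * hker d γ η) * ((c0 d)⁻¹ * hker d γ (ξ - η)))
        = ((c0 d)⁻¹ * (c0 d)⁻¹ * cdg d γ) * ‖ξ‖ ^ (4*γ-(d:ℝ)-2) := by
      have hstep : (∫ η, ((c0 d)⁻¹ * hker d γ η) * ((c0 d)⁻¹ * hker d γ (ξ - η)))
          = ((c0 d)⁻¹ * (c0 d)⁻¹ * cdg d γ * cdg d γ)
            * ∫ η : EuclideanSpace ℝ (Fin d),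
              ‖η‖ ^ (2*γ-(d:ℝ)-1) * ‖ξ-η‖ ^ (2*γ-(d:ℝ)-1) := by
        rw [← integral_const_mul]
        congr 1
        funext η
        simp only [hker]
        ring
      rw [hstep, hspec.2]
      field_simp
    simp_rw [hK]
    have hpt : ∀ s : ℝ, ‖ξ‖ * Real.exp (-(‖ξ‖ ^ (2*γ)) * s)
        * (((c0 d)⁻¹ * (c0 d)⁻¹ * cdg d γ) * ‖ξ‖ ^ (4*γ-(d:ℝ)-2))
        = (‖ξ‖ * ((c0 d)⁻¹ * (c0 d)⁻¹ * cdg d γ) * ‖ξ‖ ^ (4*γ-(d:ℝ)-2))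
          * Real.exp (-(‖ξ‖ ^ (2*γ)) * s) := fun s => by ring
    simp_rw [hpt]
    rw [intervalIntegral.integral_const_mul, exp_interval_int hL.ne']
    simp only [hker]
    have hRid2 : ‖ξ‖ * ‖ξ‖ ^ (4*γ-(d:ℝ)-2) = ‖ξ‖ ^ (2*γ) * ‖ξ‖ ^ (2*γ-(d:ℝ)-1) := by
      nth_rewrite 1 [← Real.rpow_one ‖ξ‖]
      rw [← Real.rpow_add hR, ← Real.rpow_add hR]
      congr 1
      ring
    have hc0ne : c0 d ≠ 0 := hc0.ne'
    have hBL : ‖ξ‖ * ‖ξ‖ ^ (4*γ-(d:ℝ)-2) * (‖ξ‖ ^ (2*γ))⁻¹ = ‖ξ‖ ^ (2*γ-(d:ℝ)-1) := by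
      rw [hRid2, mul_comm (‖ξ‖ ^ (2*γ)) _, mul_assoc, mul_inv_cancel₀ hL.ne', mul_one]
    have hexp : c0 d * ((‖ξ‖ * ((c0 d)⁻¹ * (c0 d)⁻¹ * cdg d γ) * ‖ξ‖ ^ (4*γ-(d:ℝ)-2))
          * ((1 - Real.exp (-(‖ξ‖ ^ (2*γ)) * t)) / ‖ξ‖ ^ (2*γ)))
        = (1 - Real.exp (-(‖ξ‖ ^ (2*γ)) * t))
            * ((c0 d)⁻¹ * (cdg d γ * ‖ξ‖ ^ (2*γ-(d:ℝ)-1))) := by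
      rw [div_eq_mul_inv]
      calc _ = (c0 d * (c0 d)⁻¹) * ((1 - Real.exp (-(‖ξ‖ ^ (2*γ)) * t))
            * ((c0 d)⁻¹ * (cdg d γ
              * (‖ξ‖ * ‖ξ‖ ^ (4*γ-(d:ℝ)-2) * (‖ξ‖ ^ (2*γ))⁻¹)))) := by ring
        _ = _ := by rw [mul_inv_cancel₀ hc0ne, one_mul, hBL]
    rw [hexp]
    ring
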